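/- Finite-amplitude pendulum action in elliptic form (Equation (pendulum_action), second part): let m > 0, ℓ > 0, g > 0, and 0 < k < 1, set θ_max = 2·arcsin k and E_tot = 2·m·g·ℓ·k². Then the action integral satisfies (1/π)·∫_{−θ_max}^{θ_max} √( 2·m·ℓ²·( E_tot − m·g·ℓ·(1 − cos θ) ) ) dθ = (8·m·ℓ²·√(g/ℓ)/π)·( E(k) − (1 − k²)·K(k) ). -/

import Mathlib

open intervalIntegral Real

set_option maxHeartbeats 1000000 in
/-- Finite-amplitude pendulum action in elliptic form: with amplitude
`θ_max = 2·arcsin k`, modulus `0 < k < 1`, and energy `E_tot = 2mgℓk²`, the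
libration action `(1/π)·∫_{−θ_max}^{θ_max} √(2mℓ²(E_tot − mgℓ(1 − cos θ))) dθ`
equals `(8mℓ²√(g/ℓ)/π)·(E(k) − (1 − k²)·K(k))`, where `K` and `E` are the
complete elliptic integrals of the first and second kind. -/
theorem pendulum_action_elliptic
    (m ℓ g k : ℝ) (hm : 0 < m) (hℓ : 0 < ℓ) (hg : 0 < g)
    (hk0 : 0 < k) (hk1 : k < 1)
    (θmax : ℝ) (hθ : θmax = 2 * Real.arcsin k)
    (Etot : ℝ) (hE : Etot = 2 * m * g * ℓ * k^2)
    (K : ℝ) (hK : K = ∫ φ in (0:ℝ)..(Real.pi/2),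
      1 / Real.sqrt (1 - k^2 * (Real.sin φ)^2))
    (Eell : ℝ) (hEell : Eell = ∫ φ in (0:ℝ)..(Real.pi/2),
      Real.sqrt (1 - k^2 * (Real.sin φ)^2)) :
    (1/Real.pi) * (∫ θ in (-θmax)..θmax,
        Real.sqrt (2 * m * ℓ^2 * (Etot - m * g * ℓ * (1 - Real.cos θ))))
      = (8 * m * ℓ^2 * Real.sqrt (g/ℓ) / Real.pi) * (Eell - (1 - k^2) * K) := by
  have hπ := Real.pi_pos
  -- positivity of the denominator expression
  have hD : ∀ φ : ℝ, 0 < 1 - k^2 * (Real.sin φ)^2 := by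
    intro φ
    nlinarith [Real.sin_sq_le_one φ, sq_nonneg k, sq_nonneg (Real.sin φ), sq_nonneg (k * Real.sin φ)]
  have hDs : ∀ φ : ℝ, 0 < Real.sqrt (1 - k^2 * (Real.sin φ)^2) :=
    fun φ => Real.sqrt_pos.mpr (hD φ)
  -- Step 1: pointwise simplification of the action integrand
  have hintegrand : ∀ θ : ℝ,
      Real.sqrt (2 * m * ℓ^2 * (Etot - m * g * ℓ * (1 - Real.cos θ)))
        = (2 * m * ℓ^2 * Real.sqrt (g/ℓ)) * Real.sqrt (k^2 - Real.sin (θ/2)^2) := by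
    intro θ
    have h2 := Real.cos_two_mul (θ/2)
    rw [show 2*(θ/2) = θ by ring] at h2
    have h1 : 1 - Real.cos θ = 2 * Real.sin (θ/2)^2 := by
      nlinarith [Real.sin_sq_add_cos_sq (θ/2)]
    have h3 : 2 * m * ℓ^2 * (Etot - m * g * ℓ * (1 - Real.cos θ))
        = ((2*m*ℓ^2)^2 * (g/ℓ)) * (k^2 - Real.sin (θ/2)^2) := by
      rw [h1, hE]; field_simp
    rw [h3, Real.sqrt_mul (by positivity), Real.sqrt_mul (sq_nonneg _),
      Real.sqrt_sq (by positivity)]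
  -- Step 2: substitution θ = 2 arcsin (k sin φ)
  set f : ℝ → ℝ := fun φ => 2 * Real.arcsin (k * Real.sin φ) with hf
  set f' : ℝ → ℝ := fun φ => 2 * (k * Real.cos φ / Real.sqrt (1 - (k * Real.sin φ)^2)) with hf'
  set G : ℝ → ℝ := fun u => Real.sqrt (k^2 - Real.sin (u/2)^2) with hG
  have habs : ∀ φ : ℝ, |k * Real.sin φ| < 1 := by
    intro φ
    rw [abs_mul, abs_of_pos hk0]
    calc k * |Real.sin φ| ≤ k * 1 := by
          exact mul_le_mul_of_nonneg_left (Real.abs_sin_le_one φ) hk0.le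
      _ < 1 := by linarith
  have hksq : ∀ φ : ℝ, (k * Real.sin φ)^2 = k^2 * (Real.sin φ)^2 := by
    intro φ; ring
  have hderiv : ∀ φ ∈ Set.uIcc (-(Real.pi/2)) (Real.pi/2), HasDerivAt f (f' φ) φ := by
    intro φ _
    have h1 : k * Real.sin φ ≠ -1 := by
      intro h; have := habs φ; rw [h] at this; simp at this
    have h2 : k * Real.sin φ ≠ 1 := by
      intro h; have := habs φ; rw [h] at this; simp at this
    have hs : HasDerivAt (fun φ : ℝ => k * Real.sin φ) (k * Real.cos φ) φ :=
      (Real.hasDerivAt_sin φ).const_mul k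
    have ha := (Real.hasDerivAt_arcsin h1 h2).comp φ hs
    have := ha.const_mul 2
    refine this.congr_deriv ?_
    simp only [hf', Function.comp]
    ring
  have hf'cont : Continuous f' := by
    apply Continuous.mul continuous_const
    apply Continuous.div (by fun_prop)
    · apply Real.continuous_sqrt.comp; fun_prop
    · intro φ
      have := hDs φ
      rw [hksq φ] at *
      positivity
  have hGcont : Continuous G := by
    apply Real.continuous_sqrt.comp; fun_prop
  have hfa : f (-(Real.pi/2)) = -θmax := by
    simp only [hf]
    rw [Real.sin_neg, Real.sin_pi_div_two, mul_neg, mul_one, Real.arcsin_neg, hθ]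
    ring
  have hfb : f (Real.pi/2) = θmax := by
    simp only [hf]
    rw [Real.sin_pi_div_two, mul_one, hθ]
  have hsub := intervalIntegral.integral_comp_smul_deriv hderiv
    hf'cont.continuousOn hGcont (a := -(Real.pi/2)) (b := Real.pi/2)
  rw [hfa, hfb] at hsub
  -- Step 3: simplify the substituted integrand on [-π/2, π/2]
  set h : ℝ → ℝ := fun φ => 2 * (k^2 * (Real.cos φ)^2 / Real.sqrt (1 - k^2 * (Real.sin φ)^2))
    with hh
  have hcongr : (∫ φ in (-(Real.pi/2))..(Real.pi/2), f' φ • (G ∘ f) φ)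
      = ∫ φ in (-(Real.pi/2))..(Real.pi/2), h φ := by
    apply intervalIntegral.integral_congr
    intro φ hφ
    rw [Set.uIcc_of_le (by linarith)] at hφ
    have hcos : 0 ≤ Real.cos φ := Real.cos_nonneg_of_mem_Icc hφ
    have hsin : Real.sin (Real.arcsin (k * Real.sin φ)) = k * Real.sin φ :=
      Real.sin_arcsin (by nlinarith [abs_lt.mp (habs φ)]) (by nlinarith [abs_lt.mp (habs φ)])
    have hGf : G (f φ) = k * Real.cos φ := by
      simp only [hG, hf]
      rw [show 2 * Real.arcsin (k * Real.sin φ) / 2 = Real.arcsin (k * Real.sin φ) by ring,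
        hsin]
      rw [show k^2 - (k * Real.sin φ)^2 = (k * Real.cos φ)^2 by
        nlinarith [Real.sin_sq_add_cos_sq φ]]
      rw [Real.sqrt_sq (by positivity)]
    show f' φ • G (f φ) = h φ
    rw [hGf]
    simp only [hf', hh, smul_eq_mul, hksq φ]
    ring
  -- Step 4: evenness
  have hhcont : Continuous h := by
    apply Continuous.mul continuous_const
    apply Continuous.div (by fun_prop)
    · apply Real.continuous_sqrt.comp; fun_prop
    · intro φ; exact (hDs φ).ne'
  have heven : (∫ φ in (-(Real.pi/2))..(Real.pi/2), h φ)
      = 2 * ∫ φ in (0:ℝ)..(Real.pi/2), h φ := by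
    have hi1 : IntervalIntegrable h MeasureTheory.volume (-(Real.pi/2)) 0 :=
      hhcont.intervalIntegrable _ _
    have hi2 : IntervalIntegrable h MeasureTheory.volume 0 (Real.pi/2) :=
      hhcont.intervalIntegrable _ _
    rw [← intervalIntegral.integral_add_adjacent_intervals hi1 hi2]
    have hneg : (∫ φ in (-(Real.pi/2))..(0:ℝ), h φ) = ∫ φ in (0:ℝ)..(Real.pi/2), h φ := by
      have := intervalIntegral.integral_comp_neg (a := (0:ℝ)) (b := Real.pi/2) h
      rw [neg_zero] at this
      rw [← this]
      apply intervalIntegral.integral_congr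
      intro φ _
      simp [hh, Real.sin_neg, Real.cos_neg, neg_sq]
    rw [hneg]; ring
  -- Step 5: the elliptic combination
  have hRHS : Eell - (1 - k^2) * K
      = ∫ φ in (0:ℝ)..(Real.pi/2), k^2 * (Real.cos φ)^2 / Real.sqrt (1 - k^2 * (Real.sin φ)^2) := by
    rw [hEell, hK, ← intervalIntegral.integral_const_mul, ← intervalIntegral.integral_sub]
    · apply intervalIntegral.integral_congr
      intro φ _
      have hd := hD φ
      have hds := hDs φ
      have hss : Real.sqrt (1 - k^2 * (Real.sin φ)^2) * Real.sqrt (1 - k^2 * (Real.sin φ)^2)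
          = 1 - k^2 * (Real.sin φ)^2 := Real.mul_self_sqrt hd.le
      field_simp
      nlinarith [Real.sin_sq_add_cos_sq φ]
    · apply Continuous.intervalIntegrable
      apply Real.continuous_sqrt.comp; fun_prop
    · apply Continuous.intervalIntegrable
      apply Continuous.mul continuous_const
      apply Continuous.div continuous_const
      · apply Real.continuous_sqrt.comp; fun_prop
      · intro φ; exact (hDs φ).ne'
  -- Assemble
  have hmain : (∫ θ in (-θmax)..θmax,
      Real.sqrt (2 * m * ℓ^2 * (Etot - m * g * ℓ * (1 - Real.cos θ))))
      = (2 * m * ℓ^2 * Real.sqrt (g/ℓ)) * ∫ θ in (-θmax)..θmax, G θ := by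
    rw [← intervalIntegral.integral_const_mul]
    apply intervalIntegral.integral_congr
    intro θ _
    exact hintegrand θ
  have hhint : (∫ φ in (0:ℝ)..(Real.pi/2), h φ)
      = 2 * ∫ φ in (0:ℝ)..(Real.pi/2),
          k^2 * (Real.cos φ)^2 / Real.sqrt (1 - k^2 * (Real.sin φ)^2) := by
    rw [← intervalIntegral.integral_const_mul]
  rw [hmain, ← hsub, hcongr, heven, hhint, hRHS]
  field_simp
  ring
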